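/- Under the structural assumption, 𝒜 is nonempty, 𝒜 has at least one locally minimal element, and F equals the intersection of all locally minimal elements of 𝒜 (Proposition 1(i) of the paper, stated graph-theoretically). -/

import Mathlib

/-!  A graph-theoretic framework for d-separation in a finite directed acyclic
graph with vertex set `{y, t} ∪ S`, following the paper's conventions. -/

/-- Two vertices are adjacent if there is an edge between them in either direction. -/
def Adj {V : Type*} (E : V → V → Prop) (a b : V) : Prop := E a b ∨ E b a

/-- The full vertex sequence of a candidate path between `y` and `t` whose list of
intermediate vertices is `p`. -/
def pathSeq {V : Type*} (y t : V) (p : List V) : List V := y :: (p ++ [t])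

/-- `p` is the list of intermediate vertices of a path between `y` and `t`:
consecutive vertices of the full sequence `y :: p ++ [t]` are joined by an edge of
the graph (in either direction), and all vertices of the full sequence are
pairwise distinct. -/
def IsPath {V : Type*} (E : V → V → Prop) (y t : V) (p : List V) : Prop :=
  List.Chain' (Adj E) (pathSeq y t p) ∧ (pathSeq y t p).Nodup

/-- `v` is a collider of the path: it is an intermediate vertex and both edges of
the path adjacent to it point into it. -/
def IsCollider {V : Type*} (E : V → V → Prop) (y t : V) (p : List V) (v : V) : Prop :=
  v ∈ p ∧ ∃ a b, [a, v, b] <:+: pathSeq y t p ∧ E a v ∧ E b v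

/-- `v` is a non-collider of the path: an intermediate vertex that is not a collider. -/
def IsNonCollider {V : Type*} (E : V → V → Prop) (y t : V) (p : List V) (v : V) : Prop :=
  v ∈ p ∧ ¬ IsCollider E y t p v

/-- `d` is a descendant of `c`: there is a directed path of length ≥ 1 from `c` to `d`. -/
def Descendant {V : Type*} (E : V → V → Prop) (c d : V) : Prop := Relation.TransGen E c d

/-- The path with intermediate vertices `p` is blocked by the set `A`: some
non-collider of the path belongs to `A`, or some collider `c` of the path is such
that neither `c` nor any descendant of `c` belongs to `A`. -/
def Blocked {V : Type*} (E : V → V → Prop) (y t : V) (A : Set V) (p : List V) : Prop :=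
  (∃ v, IsNonCollider E y t p v ∧ v ∈ A) ∨
    (∃ c, IsCollider E y t p c ∧ c ∉ A ∧ ∀ d, Descendant E c d → d ∉ A)

/-- `A` d-separates `y` and `t`: `A ⊆ S` and every path between `y` and `t` is
blocked by `A`.  (`A ∈ 𝒜` in the paper's notation.) -/
def DSep {V : Type*} (E : V → V → Prop) (y t : V) (S A : Set V) : Prop :=
  A ⊆ S ∧ ∀ p, IsPath E y t p → Blocked E y t A p

/-- The directed graph is acyclic. -/
def Acyclic {V : Type*} (E : V → V → Prop) : Prop := ∀ v, ¬ Relation.TransGen E v v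

/-- Structural assumption: every edge incident to `y` has head `y` and tail in `S`,
and every edge incident to `t` has head `t` and tail in `S`. -/
def Structural {V : Type*} (E : V → V → Prop) (y t : V) (S : Set V) : Prop :=
  (∀ a, ¬ E y a) ∧ (∀ a, ¬ E t a) ∧ (∀ a, E a y → a ∈ S) ∧ (∀ a, E a t → a ∈ S)

/-- `A` is a locally minimal element of `𝒜`: it d-separates `y` and `t` and no
proper subset of it does. -/
def LocallyMinimal {V : Type*} (E : V → V → Prop) (y t : V) (S A : Set V) : Prop :=
  DSep E y t S A ∧ ∀ B, B ⊂ A → ¬ DSep E y t S B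

/-- `A ∈ 𝒩`: `A` d-separates `y` and `t` and so does every `B` with `A ⊆ B ⊆ S`. -/
def InN {V : Type*} (E : V → V → Prop) (y t : V) (S A : Set V) : Prop :=
  DSep E y t S A ∧ ∀ B, A ⊆ B → B ⊆ S → DSep E y t S B

section AuxStmt3
variable {V : Type*}

lemma stmt3_infix_head {a v b x : V} {r : List V}
    (hnd : (x :: v :: r).Nodup) (h : [a, v, b] <:+: x :: v :: r) : a = x := by
  obtain ⟨s, u, hs⟩ := h
  have hvr : v ∉ r := (List.nodup_cons.mp hnd.of_cons).1
  match s with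
  | [] =>
    simp only [List.nil_append, List.cons_append, List.cons.injEq] at hs
    exact hs.1
  | x' :: s' =>
    exfalso
    simp only [List.cons_append, List.cons.injEq] at hs
    obtain ⟨-, hs⟩ := hs
    match s' with
    | [] =>
      simp only [List.nil_append, List.cons_append, List.cons.injEq] at hs
      exact hvr (hs.2 ▸ List.mem_cons_self)
    | c :: s'' =>
      simp only [List.cons_append, List.cons.injEq] at hs
      refine hvr (hs.2 ▸ ?_)
      simp

lemma stmt3_infix_last {a v b z : V} {l : List V}
    (hnd : (l ++ [v, z]).Nodup) (h : [a, v, b] <:+: l ++ [v, z]) : b = z := by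
  have h' : [b, v, a] <:+: z :: v :: l.reverse := by
    have := List.reverse_infix.mpr h
    simpa using this
  have hnd' : (z :: v :: l.reverse).Nodup := by
    have := List.nodup_reverse.mpr hnd
    simpa using this
  exact stmt3_infix_head hnd' h'

variable {E : V → V → Prop} {y t : V} {S : Set V}

lemma stmt3_head_block (hstruct : Structural E y t S) {v : V} {p' : List V}
    (hp : IsPath E y t (v :: p')) :
    E v y ∧ v ∈ S ∧ IsNonCollider E y t (v :: p') v := by
  obtain ⟨hchain, hnd⟩ := hp
  have hseq : pathSeq y t (v :: p') = y :: v :: (p' ++ [t]) := by simp [pathSeq]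
  rw [hseq] at hchain hnd
  have hadj : Adj E y v := (List.isChain_cons_cons.mp hchain).1
  have hEvy : E v y := by
    rcases hadj with h | h
    · exact absurd h (hstruct.1 v)
    · exact h
  refine ⟨hEvy, hstruct.2.2.1 v hEvy, List.mem_cons_self (a := v) (l := p'), ?_⟩
  rintro ⟨-, a, b, hinf, hEa, -⟩
  rw [hseq] at hinf
  have : a = y := stmt3_infix_head hnd hinf
  exact hstruct.1 v (this ▸ hEa)

lemma stmt3_last_block (hstruct : Structural E y t S) {w : V} {p'' : List V}
    (hp : IsPath E y t (p'' ++ [w])) :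
    E w t ∧ w ∈ S ∧ IsNonCollider E y t (p'' ++ [w]) w := by
  obtain ⟨hchain, hnd⟩ := hp
  have hseq : pathSeq y t (p'' ++ [w]) = (y :: p'') ++ [w, t] := by simp [pathSeq]
  rw [hseq] at hchain hnd
  have hsuff : [w, t] <:+: (y :: p'') ++ [w, t] := (List.suffix_append _ _).isInfix
  have hadj : Adj E w t := by
    have := hchain.infix hsuff
    simpa using this
  have hEwt : E w t := by
    rcases hadj with h | h
    · exact h
    · exact absurd h (hstruct.2.1 w)
  refine ⟨hEwt, hstruct.2.2.2 w hEwt, by simp, ?_⟩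
  rintro ⟨-, a, b, hinf, -, hEb⟩
  rw [hseq] at hinf
  have : b = t := stmt3_infix_last hnd hinf
  exact hstruct.2.1 w (this ▸ hEb)

lemma stmt3_dsep_S (hstruct : Structural E y t S) : DSep E y t S S := by
  refine ⟨subset_rfl, fun p hp => ?_⟩
  match p with
  | [] =>
    exfalso
    have hchain := hp.1
    simp only [pathSeq, List.nil_append, List.Chain', List.isChain_cons_cons, List.isChain_singleton,
      and_true] at hchain
    rcases hchain with h | h
    · exact hstruct.1 t h
    · exact hstruct.2.1 y h
  | v :: p' =>
    obtain ⟨-, hvS, hnc⟩ := stmt3_head_block hstruct hp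
    exact Or.inl ⟨v, hnc, hvS⟩

lemma stmt3_mem_of_dsep (hyt : y ≠ t) (hyS : y ∉ S) (htS : t ∉ S) (hstruct : Structural E y t S)
    {j : V} (hjS : j ∈ S) (hjy : E j y) (hjt : E j t)
    {A : Set V} (hA : DSep E y t S A) : j ∈ A := by
  have hpath : IsPath E y t [j] := by
    constructor
    · simp only [pathSeq, List.cons_append, List.nil_append]
      exact List.isChain_cons_cons.mpr ⟨Or.inr hjy, List.isChain_cons_cons.mpr ⟨Or.inl hjt, List.isChain_singleton _⟩⟩
    · simp only [pathSeq, List.cons_append, List.nil_append]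
      refine List.nodup_cons.mpr ⟨?_, List.nodup_cons.mpr ⟨?_, List.nodup_singleton _⟩⟩
      · simp only [List.mem_cons, List.mem_singleton, List.not_mem_nil, or_false]
        rintro (rfl | rfl)
        · exact hyS hjS
        · exact hyt rfl
      · simp only [List.mem_singleton, List.mem_cons, List.not_mem_nil, or_false]
        rintro rfl
        exact htS hjS
  rcases hA.2 [j] hpath with ⟨v, hnc, hvA⟩ | ⟨c, hc, -, -⟩
  · have : v = j := by simpa using hnc.1
    exact this ▸ hvA
  · exfalso
    obtain ⟨hcmem, a, b, hinf, hEa, -⟩ := hc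
    have hcj : c = j := by simpa using hcmem
    subst hcj
    have hseq : pathSeq y t [c] = y :: c :: [t] := by simp [pathSeq]
    rw [hseq] at hinf
    have hnd2 : (y :: c :: [t]).Nodup := by
      have := hpath.2
      simpa [pathSeq] using this
    have : a = y := stmt3_infix_head hnd2 hinf
    exact hstruct.1 c (this ▸ hEa)

end AuxStmt3

section AuxStmt3b
variable {V : Type*} {E : V → V → Prop} {y t : V} {S : Set V}

lemma stmt3_dsep_sdiff (hstruct : Structural E y t S) {j : V}
    (hnE : ¬ (E j y ∧ E j t)) : DSep E y t S (S \ {j}) := by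
  refine ⟨Set.diff_subset, fun p hp => ?_⟩
  match p with
  | [] =>
    exfalso
    have hchain := hp.1
    simp only [pathSeq, List.nil_append, List.Chain', List.isChain_cons_cons, List.isChain_singleton,
      and_true] at hchain
    rcases hchain with h | h
    · exact hstruct.1 t h
    · exact hstruct.2.1 y h
  | v :: p' =>
    obtain ⟨hEvy, hvS, hncv⟩ := stmt3_head_block hstruct hp
    rcases List.eq_nil_or_concat (v :: p') with h | ⟨p'', w, hw⟩
    · exact absurd h (by simp)
    have hp2 : IsPath E y t (p'' ++ [w]) := by rw [List.concat_eq_append] at hw; rw [← hw]; exact hp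
    obtain ⟨hEwt, hwS, hncw⟩ := stmt3_last_block hstruct hp2
    rw [List.concat_eq_append] at hw
    by_cases hvj : v = j
    · by_cases hwj : w = j
      · exact absurd ⟨hvj ▸ hEvy, hwj ▸ hEwt⟩ hnE
      · exact Or.inl ⟨w, hw ▸ hncw, hwS, hwj⟩
    · exact Or.inl ⟨v, hncv, hvS, hvj⟩

lemma stmt3_exists_min [Fintype V] {C : Set V} (hC : DSep E y t S C) :
    ∃ A, LocallyMinimal E y t S A ∧ A ⊆ C := by
  have hwf : WellFounded ((· < ·) : Set V → Set V → Prop) :=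
    (Finite.to_wellFoundedLT (α := Set V)).wf
  obtain ⟨A, ⟨hA, hAC⟩, hmin⟩ :=
    hwf.has_min {B | DSep E y t S B ∧ B ⊆ C} ⟨C, hC, subset_rfl⟩
  refine ⟨A, ⟨hA, fun B hBA hB => ?_⟩, hAC⟩
  exact hmin B ⟨hB, hBA.subset.trans hAC⟩ hBA

end AuxStmt3b



/-- Proposition 1(i): under the structural assumption, `𝒜` is
nonempty, `𝒜` has at least one locally minimal element, and the set `F` of
common parents of `y` and `t` is the intersection of all locally minimal
elements of `𝒜`. -/
theorem stmt3 {V : Type*} [Fintype V] (E : V → V → Prop) (y t : V) (S : Set V)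
    (hyt : y ≠ t) (hyS : y ∉ S) (htS : t ∉ S)
    (hcover : ∀ v, v = y ∨ v = t ∨ v ∈ S)
    (hacyc : Acyclic E)
    (hstruct : Structural E y t S) :
    (∃ A, DSep E y t S A) ∧ (∃ A, LocallyMinimal E y t S A) ∧
    {j | j ∈ S ∧ E j y ∧ E j t} = ⋂₀ {A | LocallyMinimal E y t S A} := by
  have hS : DSep E y t S S := stmt3_dsep_S hstruct
  obtain ⟨A₀, hA₀, -⟩ := stmt3_exists_min hS
  refine ⟨⟨S, hS⟩, ⟨A₀, hA₀⟩, ?_⟩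
  ext j
  simp only [Set.mem_setOf_eq, Set.mem_sInter]
  constructor
  · rintro ⟨hjS, hjy, hjt⟩ A hA
    exact stmt3_mem_of_dsep hyt hyS htS hstruct hjS hjy hjt hA.1
  · intro hj
    have hjS : j ∈ S := (hA₀.1).1 (hj A₀ hA₀)
    refine ⟨hjS, ?_⟩
    by_contra hnE
    obtain ⟨A, hA, hAC⟩ := stmt3_exists_min (stmt3_dsep_sdiff hstruct hnE)
    exact (hAC (hj A hA)).2 rfl
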